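/- Let F ⊂ S^{2n-1} be a nonempty set and (X,λ) a diagonal aligned vector field on ℂ^n. If the family {λ_1,…,λ_n} is linearly independent over ℤ, then any point w = (w_1,…,w_n) ∈ F̄ with w_k ≠ 0 for each k generates a nonsparse leaf of S^X_0(F). Conversely, if {λ_1,…,λ_n} is linearly dependent over ℤ, then there exists a set G ⊂ S^{2n-1} such that the suspension S^X_0(G) is sparse (has no nonsparse leaf) and contains the point (e^{-λ_1}/√n, …, e^{-λ_n}/√n). -/

import Mathlib

open Filter Metric Set
open scoped ENNReal Classical Topology

noncomputable section

namespace Forelli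

/-- `ℂⁿ` with the Euclidean norm. -/
abbrev E (n : ℕ) : Type := EuclideanSpace ℂ (Fin n)

/-- The open right half-plane `ℍ`. -/
def HH : Set ℂ := {t : ℂ | 0 < t.re}

/-- The complex flow `Φ^X(z,t)` of the diagonal vector field with eigenvalues `lam`. -/
def flow {n : ℕ} (lam : Fin n → ℝ) (z : E n) (t : ℂ) : E n :=
  WithLp.toLp 2 (fun j => z j * Complex.exp (-((lam j : ℂ) * t)))

/-- `S` is `λ`-balanced. -/
def LamBalanced {n : ℕ} (lam : Fin n → ℝ) (S : Set (E n)) : Prop :=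
  ∀ z ∈ S, ∀ t ∈ HH, flow lam z t ∈ S

/-- `S` is `λ`-circular. -/
def LamCircular {n : ℕ} (lam : Fin n → ℝ) (S : Set (E n)) : Prop :=
  ∀ z ∈ S, ∀ t : ℂ, t.re = 0 → flow lam z t ∈ S

/-- The suspension `S^X_0(F)`. -/
def susp {n : ℕ} (lam : Fin n → ℝ) (F : Set (E n)) : Set (E n) :=
  {w | ∃ z ∈ F, ∃ t ∈ HH, w = flow lam z t}

/-- The unit sphere `S^{2n-1}` in `ℂⁿ`. -/
def sphereE (n : ℕ) : Set (E n) := Metric.sphere (0 : E n) 1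

/-- The open unit ball `Bⁿ` in `ℂⁿ`. -/
def ballE (n : ℕ) : Set (E n) := Metric.ball (0 : E n) 1

/-- Subharmonicity of an `EReal`-valued function on `ℂ`, characterized via comparison with
real parts of holomorphic functions on closed discs. -/
def Subharmonic (u : ℂ → EReal) : Prop :=
  UpperSemicontinuous u ∧
  ∀ (c : ℂ) (r : ℝ), 0 < r →
    ∀ g : ℂ → ℂ, DifferentiableOn ℂ g (Metric.closedBall c r) →
      (∀ w ∈ Metric.sphere c r, u w ≤ ((g w).re : EReal)) →
      ∀ w ∈ Metric.closedBall c r, u w ≤ ((g w).re : EReal)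

/-- Plurisubharmonicity on `ℂⁿ`: upper semicontinuous, not identically `-∞`, and
subharmonic along every complex line. -/
def Plurisubharmonic {n : ℕ} (u : E n → EReal) : Prop :=
  UpperSemicontinuous u ∧ (∃ z, u z ≠ ⊥) ∧
  ∀ a b : E n, Subharmonic (fun t : ℂ => u (a + t • b))

/-- Membership in the class `H_λ`. -/
def MemH {n : ℕ} (lam : Fin n → ℝ) (u : E n → ℝ) : Prop :=
  Plurisubharmonic (fun z => ((u z : ℝ) : EReal)) ∧
  (∀ z, 0 ≤ u z) ∧
  (∃ z w, u z ≠ u w) ∧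
  ∀ (z : E n) (t : ℂ), u (flow lam z t) = Real.exp (-t.re) * u z

/-- `q` is (the evaluation of) a polynomial in `z` and `z̄`. -/
def IsPolyZZbar {n : ℕ} (q : E n → ℂ) : Prop :=
  ∃ P : MvPolynomial (Fin n ⊕ Fin n) ℂ,
    ∀ z : E n,
      q z = MvPolynomial.eval (Sum.elim (fun j => z j) fun j => (starRingEnd ℂ) (z j)) P

/-- `q` is (the evaluation of) a holomorphic polynomial. -/
def IsPolyZ {n : ℕ} (q : E n → ℂ) : Prop :=
  ∃ P : MvPolynomial (Fin n) ℂ, ∀ z : E n, q z = MvPolynomial.eval (fun j => z j) P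

/-- Quasi-homogeneous of type `λ` with bidegree `(d₁, d₂)`; i.e. membership in `𝓗_λ`
with the given bidegree. -/
def QuasiHomog {n : ℕ} (lam : Fin n → ℝ) (d1 d2 : ℝ) (q : E n → ℂ) : Prop :=
  IsPolyZZbar q ∧
  ∀ t ∈ HH, ∀ z : E n,
    q (flow lam z t) =
      Complex.exp (-((d1 : ℂ) * t)) * Complex.exp (-((d2 : ℂ) * (starRingEnd ℂ) t)) * q z

/-- `S^X_0(F)` has a nonsparse leaf generated by `z ∈ F̄`. -/
def NonsparseLeaf {n : ℕ} (lam : Fin n → ℝ) (F : Set (E n)) (z : E n) : Prop :=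
  z ∈ closure F ∧
  ∀ U : Set (E n), IsOpen U → z ∈ U →
    ∀ (d1 d2 : ℝ) (q : E n → ℂ), QuasiHomog lam d1 d2 q → d2 ≠ 0 →
      (∀ w ∈ closure F ∩ U, q w = 0) → ∀ w, q w = 0

/-- The `j`-th standard basis vector. -/
def coordVec {n : ℕ} (j : Fin n) : E n := EuclideanSpace.single j 1

/-- The Wirtinger derivative `∂/∂z_j`. -/
def wZ {n : ℕ} (j : Fin n) (f : E n → ℂ) : E n → ℂ := fun z =>
  (1 / 2 : ℂ) *
    (fderiv ℝ f z (coordVec j) - Complex.I * fderiv ℝ f z (Complex.I • coordVec j))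

/-- The Wirtinger derivative `∂/∂z̄_j`. -/
def wZbar {n : ℕ} (j : Fin n) (f : E n → ℂ) : E n → ℂ := fun z =>
  (1 / 2 : ℂ) *
    (fderiv ℝ f z (coordVec j) + Complex.I * fderiv ℝ f z (Complex.I • coordVec j))

/-- Iterated application of coordinatewise differential operators along a multi-index. -/
def iterD {n : ℕ} (D : (j : Fin n) → (E n → ℂ) → E n → ℂ) (k : Fin n → ℕ)
    (f : E n → ℂ) : E n → ℂ :=
  (List.finRange n).foldr (fun j g => (D j)^[k j] g) f

/-- The Taylor coefficient `a_{km} = (k! m!)⁻¹ ∂^{|k|+|m|} f / ∂z^k ∂z̄^m (0)`. -/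
def taylorCoeff {n : ℕ} (f : E n → ℂ) (k m : Fin n → ℕ) : ℂ :=
  (((∏ j, Nat.factorial (k j)) * ∏ j, Nat.factorial (m j) : ℕ) : ℂ)⁻¹ *
    iterD wZ k (iterD wZbar m f) 0

/-- `f ∈ C^∞(0)`. -/
def SmoothAtZero {n : ℕ} (f : E n → ℂ) : Prop :=
  ∀ k : ℕ, ∃ V ∈ 𝓝 (0 : E n), ContDiffOn ℝ (k : ℕ∞) f V

/-- `f` is holomorphic along the suspension `S^X_0(F)`. -/
def HoloAlong {n : ℕ} (lam : Fin n → ℝ) (F : Set (E n)) (f : E n → ℂ) : Prop :=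
  ∀ z ∈ F, DifferentiableOn ℂ (fun t : ℂ => f (flow lam z t)) HH

/-- `S^X_0(F)` is a formal Forelli suspension. -/
def FormalForelli {n : ℕ} (lam : Fin n → ℝ) (F : Set (E n)) : Prop :=
  ∀ f : E n → ℂ, SmoothAtZero f → HoloAlong lam F f →
    ∀ k m : Fin n → ℕ, m ≠ 0 → taylorCoeff f k m = 0

/-- The extremal function `Ψ_{S,λ}` for bounded `S`. -/
def PsiBdd {n : ℕ} (lam : Fin n → ℝ) (S : Set (E n)) (z : E n) : ℝ≥0∞ :=
  ⨆ u ∈ {u : E n → ℝ | MemH lam u ∧ ∀ w ∈ S, u w ≤ 1}, ENNReal.ofReal (u z)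

/-- The extremal function `Ψ_{S,λ}`. -/
def Psi {n : ℕ} (lam : Fin n → ℝ) (S : Set (E n)) (z : E n) : ℝ≥0∞ :=
  if Bornology.IsBounded S then PsiBdd lam S z
  else ⨅ G ∈ {G : Set (E n) | G ⊆ S ∧ Bornology.IsBounded G}, PsiBdd lam G z

/-- Upper semicontinuous regularization of an `ℝ≥0∞`-valued function. -/
def uscReg {n : ℕ} (v : E n → ℝ≥0∞) (z : E n) : ℝ≥0∞ := Filter.limsup v (𝓝 z)

/-- The `λ`-projective capacity `ρ_λ`. -/
def capacity {n : ℕ} (lam : Fin n → ℝ) (S : Set (E n)) : ℝ≥0∞ :=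
  ⨅ u ∈ {u : E n → ℝ |
      MemH lam u ∧ (⨆ z ∈ sphereE n, ENNReal.ofReal (u z)) = 1},
    ⨆ z ∈ S, ENNReal.ofReal (u z)

/-- `S` is `λ`-pluripolar. -/
def LamPluripolar {n : ℕ} (lam : Fin n → ℝ) (S : Set (E n)) : Prop :=
  ∃ u : E n → ℝ, MemH lam u ∧ ∀ z ∈ S, u z = 0

/-- `S` is pluripolar. -/
def Pluripolar {n : ℕ} (S : Set (E n)) : Prop :=
  ∃ u : E n → EReal, Plurisubharmonic u ∧ (∃ z w, u z ≠ u w) ∧ ∀ z ∈ S, u z = ⊥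

/-- The Lelong class `𝓛_n`. -/
def MemL {n : ℕ} (u : E n → EReal) : Prop :=
  Plurisubharmonic u ∧ ∃ C : ℝ, ∀ z, u z ≤ ((C + Real.log (1 + ‖z‖) : ℝ) : EReal)

/-- The pluricomplex Green function `V_S` for bounded `S`. -/
def VBdd {n : ℕ} (S : Set (E n)) (z : E n) : EReal :=
  sSup {y : EReal | ∃ u : E n → EReal, MemL u ∧ (∀ w ∈ S, u w ≤ (0 : EReal)) ∧ y = u z}

/-- The pluricomplex Green function `V_S`. -/
def greenV {n : ℕ} (S : Set (E n)) (z : E n) : EReal :=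
  if Bornology.IsBounded S then VBdd S z
  else ⨅ G ∈ {G : Set (E n) | G ⊆ S ∧ Bornology.IsBounded G}, VBdd G z

/-- Upper semicontinuous regularization of an `EReal`-valued function. -/
def uscRegE {n : ℕ} (v : E n → EReal) (z : E n) : EReal := Filter.limsup v (𝓝 z)

/-- The exponential `EReal → ℝ≥0∞`. -/
def expE (x : EReal) : ℝ≥0∞ :=
  if x = ⊥ then 0 else if x = ⊤ then ⊤ else ENNReal.ofReal (Real.exp x.toReal)

/-- `Φ_S = exp V_S`. -/
def PhiGreen {n : ℕ} (S : Set (E n)) (z : E n) : ℝ≥0∞ := expE (greenV S z)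

/-- `S` is `L`-regular at `a`. -/
def LRegularAt {n : ℕ} (S : Set (E n)) (a : E n) : Prop :=
  a ∈ closure S ∧ uscRegE (greenV S) a = 0

/-- `S` is locally `L`-regular at `a`. -/
def LocallyLRegularAt {n : ℕ} (S : Set (E n)) (a : E n) : Prop :=
  ∀ r : ℝ, 0 < r → LRegularAt (S ∩ Metric.ball a r) a

/-- A branch of the complex logarithm off the branch cut `{Re ≤ 0}`. -/
def log1 : ℂ → ℂ := Complex.log

/-- A branch of the complex logarithm off the branch cut `{Re ≥ 0}`. -/
def log2 : ℂ → ℂ := fun z => Complex.log (-z) + Real.pi * Complex.I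

def cut1 : Set ℂ := {z : ℂ | z.re ≤ 0}

def cut2 : Set ℂ := {z : ℂ | 0 ≤ z.re}

/-- The `λ`-direction set `F'_{λ,i}` determined by a branch `Li` of log with cut `Ci`. -/
def dirSet {n : ℕ} (lam : Fin (n + 1) → ℝ) (F : Set (E (n + 1))) (Li : ℂ → ℂ)
    (Ci : Set ℂ) : Set (E n) :=
  {w | ∃ z ∈ F, z 0 ≠ 0 ∧ z 0 ∉ Ci ∧
    ∀ j : Fin n, w j = z j.succ / Complex.exp ((lam j.succ : ℂ) * Li (z 0))}

/-- The `λ`-direction set `F'_λ = F'_{λ,1} ∪ F'_{λ,2}`. -/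
def dirUnion {n : ℕ} (lam : Fin (n + 1) → ℝ) (F : Set (E (n + 1))) : Set (E n) :=
  dirSet lam F log1 cut1 ∪ dirSet lam F log2 cut2

/-- The point `(z₂/z₁^{λ₂}, …, z_n/z₁^{λ_n})`. -/
def dirPoint {n : ℕ} (lam : Fin (n + 1) → ℝ) (Li : ℂ → ℂ) (z : E (n + 1)) : E n :=
  WithLp.toLp 2 (fun j => z j.succ / Complex.exp ((lam j.succ : ℂ) * Li (z 0)))

/-- `S^X_0(F)` has a regular leaf generated by `z ∈ F̄`. -/
def RegularLeaf {n : ℕ} (lam : Fin (n + 1) → ℝ) (F : Set (E (n + 1)))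
    (z : E (n + 1)) : Prop :=
  z ∈ closure F ∧ z 0 ≠ 0 ∧
  ∃ p : (ℂ → ℂ) × Set ℂ, (p = (log1, cut1) ∨ p = (log2, cut2)) ∧ z 0 ∉ p.2 ∧
    LocallyLRegularAt (dirUnion lam F) (dirPoint lam p.1 z)

/-- `Ω` is a domain of holomorphy: some holomorphic function on `Ω` does not extend
holomorphically across any boundary point. -/
def IsDomainOfHolomorphy {n : ℕ} (Ω : Set (E n)) : Prop :=
  IsOpen Ω ∧ IsPreconnected Ω ∧ Ω.Nonempty ∧
  ∃ f : E n → ℂ, DifferentiableOn ℂ f Ω ∧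
    ∀ (U : Set (E n)) (g : E n → ℂ),
      IsOpen U → IsPreconnected U → (U ∩ Ω).Nonempty → ¬U ⊆ Ω →
        DifferentiableOn ℂ g U →
          ¬∃ W : Set (E n), IsOpen W ∧ W.Nonempty ∧ W ⊆ U ∩ Ω ∧ Set.EqOn f g W



lemma exp_sum_pow (E : Finset ℂ) (γ : ℂ → ℂ)
    (h : ∀ s : ℝ, 0 < s → ∑ ν ∈ E, γ ν * Complex.exp (ν * s) = 0) :
    ∀ j : ℕ, ∀ s : ℝ, 0 < s → ∑ ν ∈ E, γ ν * ν ^ j * Complex.exp (ν * s) = 0 := by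
  intro j
  induction j with
  | zero => simpa using h
  | succ j ih =>
    intro s hs
    have hder : ∀ x : ℝ, HasDerivAt (fun y : ℝ => ∑ ν ∈ E, γ ν * ν ^ j * Complex.exp (ν * y))
        (∑ ν ∈ E, γ ν * ν ^ (j+1) * Complex.exp (ν * x)) x := by
      intro x
      apply HasDerivAt.fun_sum
      intro ν _
      have h1 : HasDerivAt (fun y : ℝ => (y : ℂ)) 1 x := by
        simpa using (hasDerivAt_id x).ofReal_comp
      have h2 : HasDerivAt (fun y : ℝ => ν * (y : ℂ)) ν x := by
        simpa using h1.const_mul ν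
      have h3 := h2.cexp
      have h4 := h3.const_mul (γ ν * ν ^ j)
      convert h4 using 1
      · rfl
      ring
    have hev : (fun y : ℝ => ∑ ν ∈ E, γ ν * ν ^ j * Complex.exp (ν * y)) =ᶠ[𝓝 s]
        (fun _ => (0:ℂ)) := by
      filter_upwards [Ioi_mem_nhds hs] with y hy using ih y hy
    have : deriv (fun y : ℝ => ∑ ν ∈ E, γ ν * ν ^ j * Complex.exp (ν * y)) s = 0 := by
      rw [hev.deriv_eq]; simp
    rw [(hder s).deriv] at this
    exact this

lemma exp_ind (E : Finset ℂ) (γ : ℂ → ℂ)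
    (h : ∀ s : ℝ, 0 < s → ∑ ν ∈ E, γ ν * Complex.exp (ν * s) = 0) :
    ∀ ν ∈ E, γ ν = 0 := by
  intro ν0 hν0
  have key : ∀ j : ℕ, ∑ ν ∈ E, (γ ν * Complex.exp ν) * ν ^ j = 0 := by
    intro j
    have := exp_sum_pow E γ h j 1 one_pos
    rw [← this]
    apply Finset.sum_congr rfl
    intro ν _
    push_cast
    ring_nf
  have hq : ∀ q : Polynomial ℂ, ∑ ν ∈ E, (γ ν * Complex.exp ν) * q.eval ν = 0 := by
    intro q
    have : ∀ ν ∈ E, (γ ν * Complex.exp ν) * q.eval ν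
        = ∑ j ∈ Finset.range (q.natDegree + 1), q.coeff j * ((γ ν * Complex.exp ν) * ν ^ j) := by
      intro ν _
      rw [Polynomial.eval_eq_sum_range, Finset.mul_sum]
      apply Finset.sum_congr rfl
      intro j _
      ring
    rw [Finset.sum_congr rfl this, Finset.sum_comm]
    apply Finset.sum_eq_zero
    intro j _
    rw [← Finset.mul_sum, key j, mul_zero]
  have hfin := hq (Lagrange.basis E id ν0)
  rw [Finset.sum_eq_single ν0] at hfin
  · have h1 : (Lagrange.basis E id ν0).eval ν0 = 1 := by
      simpa using Lagrange.eval_basis_self (Set.injOn_id _) hν0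
    rw [h1, mul_one] at hfin
    exact (mul_eq_zero.mp hfin).resolve_right (Complex.exp_ne_zero ν0)
  · intro b hb hbne
    have h0 : (Lagrange.basis E id ν0).eval b = 0 := by
      simpa using Lagrange.eval_basis_of_ne (v := (id : ℂ → ℂ)) hbne.symm hb
    rw [h0, mul_zero]
  · intro hn; exact absurd hν0 hn


-- weights and monomials
def mA {n : ℕ} (lam : Fin n → ℝ) (d : (Fin n ⊕ Fin n) →₀ ℕ) : ℝ :=
  ∑ j, lam j * d (Sum.inl j)

def mB {n : ℕ} (lam : Fin n → ℝ) (d : (Fin n ⊕ Fin n) →₀ ℕ) : ℝ :=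
  ∑ j, lam j * d (Sum.inr j)

def mM {n : ℕ} (d : (Fin n ⊕ Fin n) →₀ ℕ) (z : E n) : ℂ :=
  (∏ j, z j ^ d (Sum.inl j)) * ∏ j, (starRingEnd ℂ) (z j) ^ d (Sum.inr j)

def nuAB (a b : ℝ) : ℂ := -(a : ℂ) * (1 + Complex.I) - (b : ℂ) * (1 - Complex.I)

lemma nuAB_inj {a b a' b' : ℝ} (h : nuAB a b = nuAB a' b') : a = a' ∧ b = b' := by
  have hre := congrArg Complex.re h
  have him := congrArg Complex.im h
  simp [nuAB, Complex.ext_iff] at hre him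
  constructor <;> linarith

lemma weight_inj {N : ℕ} {lam : Fin N → ℝ} (hli : LinearIndependent ℤ lam)
    (a b : Fin N → ℕ) (hab : ∑ j, lam j * a j = ∑ j, lam j * b j) :
    ∀ j, a j = b j := by
  have h := Fintype.linearIndependent_iff.mp hli (fun j => (a j : ℤ) - b j) ?_
  · intro j
    have := h j
    omega
  · have h1 : ∑ j, ((a j : ℤ) - b j) • lam j = ∑ j, (lam j * a j - lam j * b j) := by
      apply Finset.sum_congr rfl
      intro j _
      push_cast [zsmul_eq_mul]
      ring
    rw [h1, Finset.sum_sub_distrib, hab, sub_self]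

lemma nu_inj {N : ℕ} {lam : Fin N → ℝ} (hli : LinearIndependent ℤ lam)
    {d d' : (Fin N ⊕ Fin N) →₀ ℕ}
    (h : nuAB (mA lam d) (mB lam d) = nuAB (mA lam d') (mB lam d')) : d = d' := by
  obtain ⟨hA, hB⟩ := nuAB_inj h
  have h1 := weight_inj hli (fun j => d (Sum.inl j)) (fun j => d' (Sum.inl j)) hA
  have h2 := weight_inj hli (fun j => d (Sum.inr j)) (fun j => d' (Sum.inr j)) hB
  ext i
  cases i with
  | inl j => exact h1 j
  | inr j => exact h2 j

lemma eval_expand {N : ℕ} (P : MvPolynomial (Fin N ⊕ Fin N) ℂ) (z : E N) :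
    MvPolynomial.eval (Sum.elim (fun j => z j) (fun j => (starRingEnd ℂ) (z j))) P
      = ∑ d ∈ P.support, P.coeff d * mM d z := by
  rw [MvPolynomial.eval_eq']
  apply Finset.sum_congr rfl
  intro d _
  rw [Fintype.prod_sum_type]
  rfl

lemma prod_pow_flow {N : ℕ} (lam : Fin N → ℝ) (a : Fin N → ℕ) (z : Fin N → ℂ) (t : ℂ) :
    ∏ j, (z j * Complex.exp (-((lam j : ℂ) * t))) ^ a j
      = (∏ j, z j ^ a j) * Complex.exp (-(((∑ j, lam j * a j : ℝ)) : ℂ) * t) := by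
  have key : ∀ j, (z j * Complex.exp (-((lam j : ℂ) * t))) ^ a j
      = z j ^ a j * Complex.exp ((a j : ℂ) * (-((lam j : ℂ) * t))) := by
    intro j
    rw [mul_pow, Complex.exp_nat_mul]
  have harg : (∑ j, (a j : ℂ) * (-((lam j : ℂ) * t)))
      = -(((∑ j, lam j * a j : ℝ)) : ℂ) * t := by
    push_cast
    rw [neg_mul, Finset.sum_mul, ← Finset.sum_neg_distrib]
    exact Finset.sum_congr rfl fun j _ => by ring
  rw [Finset.prod_congr rfl fun j _ => key j, Finset.prod_mul_distrib, ← Complex.exp_sum, harg]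

lemma conj_flow {N : ℕ} (lam : Fin N → ℝ) (z : E N) (t : ℂ) (j : Fin N) :
    (starRingEnd ℂ) (flow lam z t j)
      = (starRingEnd ℂ) (z j) * Complex.exp (-((lam j : ℂ) * (starRingEnd ℂ) t)) := by
  show (starRingEnd ℂ) (z j * Complex.exp (-((lam j : ℂ) * t))) = _
  rw [map_mul, ← Complex.exp_conj, map_neg, map_mul, Complex.conj_ofReal]

lemma mM_flow {N : ℕ} (lam : Fin N → ℝ) (d : (Fin N ⊕ Fin N) →₀ ℕ) (z : E N) (t : ℂ) :
    mM d (flow lam z t) = mM d z * Complex.exp (-((mA lam d : ℝ) : ℂ) * t)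
      * Complex.exp (-((mB lam d : ℝ) : ℂ) * (starRingEnd ℂ) t) := by
  unfold mM mA mB
  have h1 : ∀ j : Fin N, flow lam z t j = z j * Complex.exp (-((lam j : ℂ) * t)) := fun j => rfl
  have h2 := conj_flow lam z t
  simp only [h2]
  simp only [h1]
  rw [prod_pow_flow lam (fun j => d (Sum.inl j)) (fun j => z j) t,
      prod_pow_flow lam (fun j => d (Sum.inr j)) (fun j => (starRingEnd ℂ) (z j)) ((starRingEnd ℂ) t)]
  ring



lemma part1_core {N : ℕ} {lam : Fin N → ℝ} (hli : LinearIndependent ℤ lam)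
    {d1 d2 : ℝ} {q : E N → ℂ} (hpoly : IsPolyZZbar q)
    (hqh : ∀ t ∈ HH, ∀ z : E N, q (flow lam z t) =
      Complex.exp (-((d1 : ℂ) * t)) * Complex.exp (-((d2 : ℂ) * (starRingEnd ℂ) t)) * q z)
    (w : E N) (hw : ∀ k, w k ≠ 0) (hqw : q w = 0) : ∀ z, q z = 0 := by
  obtain ⟨P, hP⟩ := hpoly
  set ν : ((Fin N ⊕ Fin N) →₀ ℕ) → ℂ := fun d => nuAB (mA lam d) (mB lam d) with hν
  set νs : ℂ := nuAB d1 d2 with hνs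
  have master : ∀ z : E N, ∀ s : ℝ, 0 < s →
      ∑ d ∈ P.support, (P.coeff d * mM d z) * Complex.exp (ν d * s)
        = q z * Complex.exp (νs * s) := by
    intro z s hs
    have htH : ((1 + Complex.I) * (s : ℂ)) ∈ HH := by
      simp [HH, Complex.mul_re, hs]
    have hconj : (starRingEnd ℂ) ((1 + Complex.I) * (s : ℂ)) = (1 - Complex.I) * (s : ℂ) := by
      simp [map_mul, Complex.conj_ofReal, sub_eq_add_neg]
    have h0 := hqh ((1 + Complex.I) * (s : ℂ)) htH z
    have hql : q (flow lam z ((1 + Complex.I) * (s : ℂ)))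
        = ∑ d ∈ P.support, (P.coeff d * mM d z) * Complex.exp (ν d * s) := by
      rw [hP, eval_expand]
      apply Finset.sum_congr rfl
      intro d _
      rw [mM_flow, hconj]
      rw [mul_assoc, mul_assoc, ← Complex.exp_add]
      congr 2
      simp only [hν, nuAB]
      ring
    rw [hql] at h0
    rw [h0, hconj, ← Complex.exp_add, mul_comm (Complex.exp _) (q z)]
    congr 2
    simp only [hνs, nuAB]
    ring
  have key : ∀ d0 ∈ P.support, ∀ z : E N,
      P.coeff d0 * mM d0 z = if ν d0 = νs then q z else 0 := by
    intro d0 hd0 z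
    set Efin : Finset ℂ := insert νs (P.support.image ν) with hE
    set γ : ℂ → ℂ := fun e =>
      (∑ d ∈ P.support.filter (fun d => ν d = e), P.coeff d * mM d z)
        - (if e = νs then q z else 0) with hγ
    have hsum : ∀ s : ℝ, 0 < s → ∑ e ∈ Efin, γ e * Complex.exp (e * s) = 0 := by
      intro s hs
      have h1 : ∑ e ∈ Efin, (∑ d ∈ P.support.filter (fun d => ν d = e), P.coeff d * mM d z)
          * Complex.exp (e * s)
          = ∑ d ∈ P.support, (P.coeff d * mM d z) * Complex.exp (ν d * s) := by
        rw [← Finset.sum_fiberwise_of_maps_to (g := ν)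
            (fun d hd => Finset.mem_insert_of_mem (Finset.mem_image_of_mem ν hd))
            (fun d => (P.coeff d * mM d z) * Complex.exp (ν d * s))]
        apply Finset.sum_congr rfl
        intro e _
        rw [Finset.sum_mul]
        apply Finset.sum_congr rfl
        intro d hd
        rw [(Finset.mem_filter.mp hd).2]
      have h2 : ∑ e ∈ Efin, (if e = νs then q z else 0) * Complex.exp (e * s)
          = q z * Complex.exp (νs * s) := by
        have hc : ∀ e ∈ Efin, (if e = νs then q z else 0) * Complex.exp (e * s)
            = if e = νs then q z * Complex.exp (νs * s) else 0 := by
          intro e _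
          by_cases h : e = νs <;> simp [h]
        rw [Finset.sum_congr rfl hc, Finset.sum_ite_eq' Efin νs
          (fun _ => q z * Complex.exp (νs * s))]
        simp [hE]
      simp only [hγ, sub_mul]
      rw [Finset.sum_sub_distrib, h1, h2, master z s hs, sub_self]
    have hγ0 := exp_ind Efin γ hsum (ν d0)
      (Finset.mem_insert_of_mem (Finset.mem_image_of_mem ν hd0))
    have hfib : P.support.filter (fun d => ν d = ν d0) = {d0} := by
      ext d
      simp only [Finset.mem_filter, Finset.mem_singleton]
      constructor
      · rintro ⟨hd, hνd⟩
        exact nu_inj hli hνd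
      · rintro rfl
        exact ⟨hd0, rfl⟩
    have := hγ0
    rw [hγ] at this
    simp only [hfib, Finset.sum_singleton, sub_eq_zero] at this
    exact this
  intro z
  rw [hP, eval_expand]
  apply Finset.sum_eq_zero
  intro d hd
  by_cases hcase : ν d = νs
  · have hcw := key d hd w
    rw [if_pos hcase, hqw] at hcw
    have hMw : mM d w ≠ 0 := by
      apply mul_ne_zero <;>
        (apply Finset.prod_ne_zero_iff.mpr; intro j _; apply pow_ne_zero)
      · exact hw j
      · exact fun h => hw j (by simpa using congrArg (starRingEnd ℂ) h)
    have hc : P.coeff d = 0 := (mul_eq_zero.mp hcw).resolve_right hMw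
    rw [hc, zero_mul]
  · have hk := key d hd z
    rw [if_neg hcase] at hk
    exact hk

lemma part2 {n : ℕ} (lam : Fin (n + 1) → ℝ) (hpos : ∀ k, 0 < lam k)
    (hdep : ¬LinearIndependent ℤ lam) :
    ∃ G : Set (E (n + 1)), G ⊆ sphereE (n + 1) ∧
        (¬∃ z, NonsparseLeaf lam G z) ∧
        (show E (n + 1) from
            WithLp.toLp 2 (fun k => ((Real.exp (-lam k) / Real.sqrt (n + 1) : ℝ) : ℂ))) ∈ susp lam G := by
  rw [Fintype.linearIndependent_iff] at hdep
  push_neg at hdep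
  obtain ⟨g, hg0, i0, hgi0⟩ := hdep
  set k : Fin (n + 1) → ℕ := fun i => (g i).toNat with hk
  set m : Fin (n + 1) → ℕ := fun i => (-(g i)).toNat with hm
  have hkm : ∀ i, (k i : ℤ) - (m i : ℤ) = g i := by
    intro i; simp only [hk, hm]; omega
  have hkmne : k i0 ≠ m i0 := by
    intro h
    apply hgi0
    have := hkm i0
    omega
  have hDsum : ∑ j, lam j * k j = ∑ j, lam j * m j := by
    have h1 : ∑ j, ((g j : ℝ)) * lam j = 0 := by
      rw [← hg0]
      exact Finset.sum_congr rfl fun j _ => by rw [zsmul_eq_mul]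
    have h2 : ∑ j, (lam j * k j - lam j * m j) = 0 := by
      rw [← h1]
      apply Finset.sum_congr rfl
      intro j _
      have := hkm j
      have : ((k j : ℝ)) - m j = g j := by exact_mod_cast congrArg (Int.cast : ℤ → ℝ) this
      rw [← this]
      ring
    rw [Finset.sum_sub_distrib] at h2
    linarith
  set D : ℝ := ∑ j, lam j * k j with hD
  have hDpos : 0 < D := by
    have hor : 0 < k i0 ∨ 0 < m i0 := by omega
    have hnn : ∀ b : Fin (n+1) → ℕ, ∀ j ∈ Finset.univ, (0:ℝ) ≤ lam j * b j :=
      fun b j _ => mul_nonneg (hpos j).le (Nat.cast_nonneg _)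
    rcases hor with h | h
    · exact Finset.sum_pos' (hnn k) ⟨i0, Finset.mem_univ _,
        mul_pos (hpos i0) (by exact_mod_cast h)⟩
    · rw [hDsum]
      exact Finset.sum_pos' (hnn m) ⟨i0, Finset.mem_univ _,
        mul_pos (hpos i0) (by exact_mod_cast h)⟩
  have hDne : D ≠ 0 := ne_of_gt hDpos
  -- the quasi-homogeneous polynomial
  set q2 : E (n + 1) → ℂ := fun z =>
    (∏ j, z j ^ k j) * (∏ j, (starRingEnd ℂ) (z j) ^ m j)
      - (∏ j, z j ^ m j) * (∏ j, (starRingEnd ℂ) (z j) ^ k j) with hq2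
  have hQH : QuasiHomog lam D D q2 := by
    constructor
    · refine ⟨MvPolynomial.monomial (Finsupp.equivFunOnFinite.symm (Sum.elim k m)) 1
        - MvPolynomial.monomial (Finsupp.equivFunOnFinite.symm (Sum.elim m k)) 1, ?_⟩
      intro z
      rw [map_sub]
      rw [MvPolynomial.eval_monomial, MvPolynomial.eval_monomial]
      rw [Finsupp.prod_fintype _ _ (fun i => pow_zero _),
          Finsupp.prod_fintype _ _ (fun i => pow_zero _)]
      simp only [Finsupp.coe_equivFunOnFinite_symm, one_mul]
      rw [Fintype.prod_sum_type, Fintype.prod_sum_type]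
      simp only [Sum.elim_inl, Sum.elim_inr, hq2]
    · intro t ht z
      have hflow : ∀ j, flow lam z t j = z j * Complex.exp (-((lam j : ℂ) * t)) :=
        fun j => rfl
      simp only [hq2, conj_flow lam z t]
      simp only [hflow]
      rw [prod_pow_flow lam k (fun j => z j) t,
          prod_pow_flow lam m (fun j => (starRingEnd ℂ) (z j)) ((starRingEnd ℂ) t),
          prod_pow_flow lam m (fun j => z j) t,
          prod_pow_flow lam k (fun j => (starRingEnd ℂ) (z j)) ((starRingEnd ℂ) t),
          ← hDsum, ← hD]
      ring
  -- the base point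
  set r : ℝ := (Real.sqrt (n + 1))⁻¹ with hr
  set z0 : E (n + 1) := WithLp.toLp 2 (fun _ => (r : ℂ)) with hz0
  have hrpos : 0 < Real.sqrt (n + 1) := Real.sqrt_pos.mpr (by positivity)
  have hq2z0 : q2 z0 = 0 := by
    simp only [hq2, hz0, Complex.conj_ofReal]
    ring
  -- nonvanishing point
  have hq2ne : ∃ z : E (n + 1), q2 z ≠ 0 := by
    set c : ℝ := (k i0 : ℝ) - (m i0 : ℝ) with hc
    have hcne : c ≠ 0 := by
      simp only [hc, sub_ne_zero]
      exact_mod_cast hkmne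
    set θ : ℝ := Real.pi / (2 * c) with hθ
    have hcθ : c * θ = Real.pi / 2 := by
      rw [hθ]
      field_simp
    set z : E (n + 1) := WithLp.toLp 2 (fun j => if j = i0 then Complex.exp (Complex.I * θ) else 1) with hz
    refine ⟨z, ?_⟩
    have hconjz : ∀ j, (starRingEnd ℂ) (z j)
        = if j = i0 then Complex.exp (-(Complex.I * θ)) else 1 := by
      intro j
      simp only [hz]
      by_cases h : j = i0 <;> simp [h, ← Complex.exp_conj, Complex.conj_ofReal]
    have hprod : ∀ (a : Fin (n+1) → ℕ) (u : ℂ),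
        ∏ j, (if j = i0 then u else 1) ^ a j = u ^ a i0 := by
      intro a u
      have : ∀ j, (if j = i0 then u else 1) ^ a j = if j = i0 then u ^ a j else 1 := by
        intro j; by_cases h : j = i0 <;> simp [h]
      rw [Finset.prod_congr rfl fun j _ => this j, Finset.prod_ite_eq' Finset.univ i0]
      simp
    have hval : ∀ (p q : ℕ), Complex.exp (Complex.I * θ) ^ p
        * Complex.exp (-(Complex.I * θ)) ^ q
        = Complex.exp ((((p : ℝ) - q) * θ : ℝ) * Complex.I) := by
      intro p q
      rw [← Complex.exp_nat_mul, ← Complex.exp_nat_mul, ← Complex.exp_add]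
      congr 1
      push_cast
      ring
    have hzj : ∀ j, z j = if j = i0 then Complex.exp (Complex.I * θ) else 1 :=
      fun j => rfl
    have ez : ∀ a : Fin (n + 1) → ℕ,
        ∏ j, z j ^ a j = Complex.exp (Complex.I * (θ : ℂ)) ^ a i0 := by
      intro a
      have h : ∀ j ∈ Finset.univ, z j ^ a j
          = (if j = i0 then Complex.exp (Complex.I * (θ : ℂ)) else 1) ^ a j :=
        fun j _ => by rw [hzj j]
      rw [Finset.prod_congr rfl h]
      exact hprod a _
    have ec : ∀ a : Fin (n + 1) → ℕ,
        ∏ j, (starRingEnd ℂ) (z j) ^ a j = Complex.exp (-(Complex.I * (θ : ℂ))) ^ a i0 := by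
      intro a
      have h : ∀ j ∈ Finset.univ, (starRingEnd ℂ) (z j) ^ a j
          = (if j = i0 then Complex.exp (-(Complex.I * (θ : ℂ))) else 1) ^ a j :=
        fun j _ => by rw [hconjz j]
      rw [Finset.prod_congr rfl h]
      exact hprod a _
    have hskm : ((k i0 : ℝ) - (m i0 : ℝ)) * θ = Real.pi / 2 := by
      rw [← hc, hcθ]
    have hsmk : ((m i0 : ℝ) - (k i0 : ℝ)) * θ = -(Real.pi / 2) := by
      rw [← hcθ, hc]
      ring
    have hA : (∏ j, z j ^ k j) * (∏ j, (starRingEnd ℂ) (z j) ^ m j)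
        = Complex.exp (((Real.pi / 2 : ℝ) : ℂ) * Complex.I) := by
      rw [ez k, ec m, hval (k i0) (m i0), hskm]
    have hB : (∏ j, z j ^ m j) * (∏ j, (starRingEnd ℂ) (z j) ^ k j)
        = Complex.exp (((-(Real.pi / 2) : ℝ) : ℂ) * Complex.I) := by
      rw [ez m, ec k, hval (m i0) (k i0), hsmk]
    have hI1 : Complex.exp (((Real.pi / 2 : ℝ) : ℂ) * Complex.I) = Complex.I := by
      rw [Complex.exp_mul_I, ← Complex.ofReal_cos, ← Complex.ofReal_sin,
          Real.cos_pi_div_two, Real.sin_pi_div_two]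
      simp
    have hI2 : Complex.exp (((-(Real.pi / 2) : ℝ) : ℂ) * Complex.I) = -Complex.I := by
      rw [Complex.exp_mul_I, ← Complex.ofReal_cos, ← Complex.ofReal_sin,
          Real.cos_neg, Real.sin_neg, Real.cos_pi_div_two, Real.sin_pi_div_two]
      simp
    simp only [hq2]
    rw [hA, hB, hI1, hI2]
    intro hcontra
    rw [sub_neg_eq_add] at hcontra
    have : (2 : ℂ) * Complex.I = 0 := by rw [two_mul]; exact hcontra
    simpa [Complex.I_ne_zero] using this
  -- assemble
  refine ⟨{z0}, ?_, ?_, ?_⟩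
  · intro x hx
    rw [Set.mem_singleton_iff] at hx
    subst hx
    have hnorm : ‖z0‖ = 1 := by
      rw [EuclideanSpace.norm_eq]
      have hcoord : ∀ i : Fin (n + 1), ‖z0 i‖ ^ 2 = r ^ 2 := by
        intro i
        simp only [hz0]
        rw [Complex.norm_real]
        rw [Real.norm_eq_abs, abs_of_nonneg (by positivity)]
      rw [Finset.sum_congr rfl fun i _ => hcoord i, Finset.sum_const, Finset.card_univ,
          Fintype.card_fin, nsmul_eq_mul, hr, inv_pow,
          Real.sq_sqrt (by positivity : (0:ℝ) ≤ (n : ℝ) + 1)]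
      push_cast
      rw [mul_inv_cancel₀ (by positivity : ((n : ℝ) + 1) ≠ 0)]
      exact Real.sqrt_one
    simpa [sphereE, mem_sphere_zero_iff_norm] using hnorm
  · rintro ⟨z, hzc, hall⟩
    have hvan : ∀ w ∈ closure ({z0} : Set (E (n + 1))) ∩ Set.univ, q2 w = 0 := by
      intro w hw
      have hwz : w = z0 := by simpa [closure_singleton] using hw.1
      rw [hwz]
      exact hq2z0
    have h := hall Set.univ isOpen_univ (Set.mem_univ z) D D q2 hQH hDne hvan
    obtain ⟨zz, hzz⟩ := hq2ne
    exact hzz (h zz)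
  · refine ⟨z0, rfl, 1, by simp [HH], ?_⟩
    apply WithLp.ofLp_injective
    funext j
    show ((Real.exp (-lam j) / Real.sqrt (n + 1) : ℝ) : ℂ)
      = z0 j * Complex.exp (-((lam j : ℂ) * 1))
    simp only [hz0, mul_one, hr]
    push_cast
    ring


/-- if `λ` is linearly independent over `ℤ` then every `w ∈ F̄` with all
coordinates nonzero generates a nonsparse leaf; if `λ` is linearly dependent over `ℤ` then
there is a sparse suspension `S^X_0(G)` containing `(e^{-λ_1}/√n, …, e^{-λ_n}/√n)`. -/
theorem statement3 {n : ℕ} (lam : Fin (n + 1) → ℝ)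
    (hlam0 : lam 0 = 1) (hpos : ∀ k, 0 < lam k) :
    (LinearIndependent ℤ lam →
      ∀ F : Set (E (n + 1)), F.Nonempty → F ⊆ sphereE (n + 1) →
        ∀ w ∈ closure F, (∀ k, w k ≠ 0) → NonsparseLeaf lam F w) ∧
    (¬LinearIndependent ℤ lam →
      ∃ G : Set (E (n + 1)), G ⊆ sphereE (n + 1) ∧
        (¬∃ z, NonsparseLeaf lam G z) ∧
        (show E (n + 1) from
            WithLp.toLp 2 (fun k => ((Real.exp (-lam k) / Real.sqrt (n + 1) : ℝ) : ℂ))) ∈ susp lam G) := by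
  constructor
  · intro hli F hFne hFsub w hw hwnz
    refine ⟨hw, ?_⟩
    intro U hU hwU d1 d2 q hq hd2 hvan z
    exact part1_core hli hq.1 hq.2 w hwnz (hvan w ⟨hw, hwU⟩) z
  · intro hdep
    exact part2 lam hpos hdep


end Forelli
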